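/- For any infinite cardinal κ and any natural number r, the partition relation beth_r(κ)^+ → (κ^+)^{r+1}_κ holds: every coloring of the (r+1)-element subsets of a set of size beth_r(κ)^+ in κ colors admits a homogeneous set of size κ^+. -/

import Mathlib

open Cardinal

/-- `iterBeth κ r` is the `r`-fold iterated power-set cardinal starting at `κ`:
`iterBeth κ 0 = κ` and `iterBeth κ (n+1) = 2 ^ iterBeth κ n`. -/
def iterBeth (κ : Cardinal) : ℕ → Cardinal
  | 0 => κ
  | n + 1 => 2 ^ iterBeth κ n

namespace ErdosRadoAux

open Function Set

lemma mk_finset_le (X : Type) : #(Finset X) ≤ max ℵ₀ #X := by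
  cases finite_or_infinite X
  · haveI := Fintype.ofFinite X
    exact le_max_of_le_left (Cardinal.lt_aleph0_of_finite (Finset X)).le
  · exact le_max_of_le_right (Cardinal.mk_finset_of_infinite X).le

variable {A ι O : Type} [DecidableEq A] [LinearOrder O] [WellFoundedLT O]

/-- The set of points `y ∉ P` whose `c`-type over `P` (w.r.t. `(n+1)`-element subsets of `P`)
matches that of `z`. -/
def compatSet (c : Finset A → ι) (n : ℕ) (P : Set A) (z : A) : Set A :=
  {y | y ∉ P ∧ ∀ s : Finset A, ↑s ⊆ P → s.card = n + 1 → c (insert y s) = c (insert z s)}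

open scoped Classical in
noncomputable def nextPt (wA : WellFounded (@WellOrderingRel A)) (c : Finset A → ι) (n : ℕ)
    (z : A) (P : Set A) : A :=
  if h : (compatSet c n P z).Nonempty then wA.min _ h else z

/-- The transfinite sequence of approximations to `a`. -/
noncomputable def seqF (wA : WellFounded (@WellOrderingRel A)) (c : Finset A → ι) (n : ℕ)
    (a : A) : O → A :=
  wellFounded_lt.fix (fun α IH => nextPt wA c n a {x | ∃ β, ∃ _ : β < α, IH β ‹_› = x})

lemma seqF_eq (wA : WellFounded (@WellOrderingRel A)) (c : Finset A → ι) (n : ℕ) (a : A)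
    (α : O) : seqF wA c n a α = nextPt wA c n a (seqF wA c n a '' Set.Iio α) := by
  rw [seqF, WellFounded.fix_eq]
  congr 1
  ext x
  simp only [Set.mem_setOf_eq, Set.mem_image, Set.mem_Iio]
  constructor
  · rintro ⟨β, hβ, rfl⟩; exact ⟨β, hβ, rfl⟩
  · rintro ⟨β, hβ, rfl⟩; exact ⟨β, hβ, rfl⟩

/-- `live a α` : the sequence for `a` has not yet hit `a` before `α`. -/
def live (wA : WellFounded (@WellOrderingRel A)) (c : Finset A → ι) (n : ℕ) (a : A)
    (α : O) : Prop :=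
  ∀ γ : O, γ < α → seqF wA c n a γ ≠ a

variable {wA : WellFounded (@WellOrderingRel A)} {c : Finset A → ι} {n : ℕ}

lemma not_mem_of_live {a : A} {α : O} (h : live wA c n a α) :
    a ∉ seqF wA c n a '' Set.Iio α := by
  rintro ⟨β, hβ, hb⟩; exact h β hβ hb

lemma self_mem_compatSet {P : Set A} {a : A} (h : a ∉ P) : a ∈ compatSet c n P a :=
  ⟨h, fun _ _ _ => rfl⟩

lemma seqF_mem_compat {a : A} {α : O} (h : live wA c n a α) :
    seqF wA c n a α ∈ compatSet c n (seqF wA c n a '' Set.Iio α) a := by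
  have hne : (compatSet c n (seqF wA c n a '' Set.Iio α) a).Nonempty :=
    ⟨a, self_mem_compatSet (not_mem_of_live h)⟩
  rw [seqF_eq, nextPt, dif_pos hne]
  exact wA.min_mem _ hne

lemma seqF_lt_ne {a : A} {γ₁ γ₂ : O} (h : live wA c n a γ₂) (hlt : γ₁ < γ₂) :
    seqF wA c n a γ₁ ≠ seqF wA c n a γ₂ := by
  intro he
  exact (seqF_mem_compat h).1 ⟨γ₁, hlt, he⟩

lemma min_congr {S S' : Set A} (h : S = S') (hS : S.Nonempty) (hS' : S'.Nonempty) :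
    wA.min S hS = wA.min S' hS' := by subst h; rfl

/-- extract pointwise info from an equality of sigma-pairs of type functions -/
lemma sigma_eval {ι' : Type} {x y : O} {m : ℕ}
    {f : {s : Finset O // ↑s ⊆ Set.Iio x ∧ s.card = m} → ι'}
    {g : {s : Finset O // ↑s ⊆ Set.Iio y ∧ s.card = m} → ι'}
    (h : (⟨x, f⟩ : Σ δ : O, ({s : Finset O // ↑s ⊆ Set.Iio δ ∧ s.card = m} → ι')) = ⟨y, g⟩) :
    ∀ (s : Finset O) (hx : ↑s ⊆ Set.Iio x ∧ s.card = m) (hy : ↑s ⊆ Set.Iio y ∧ s.card = m),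
      f ⟨s, hx⟩ = g ⟨s, hy⟩ := by
  obtain ⟨h1, h2⟩ := Sigma.mk.inj_iff.mp h
  subst h1
  cases eq_of_heq h2
  intro s hx hy
  rfl

/-- Key counting lemma: if `#A` is bigger than `2 ^ λ'`, some `a : A` has a full branch. -/
lemma exists_good (wA : WellFounded (@WellOrderingRel A)) (c : Finset A → ι) (n : ℕ)
    (lam : Cardinal) (hlam : ℵ₀ ≤ lam) (hι : #ι ≤ lam) (hO : #O ≤ 2 ^ lam)
    (hIio : ∀ δ : O, #(Set.Iio δ) ≤ lam) (hA : 2 ^ lam < #A) :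
    ∃ a : A, ∀ α : O, seqF wA c n a α ≠ a := by
  by_contra hcon
  push_neg at hcon
  -- stopping time
  have wfO : WellFounded ((· < ·) : O → O → Prop) := wellFounded_lt
  set δ : A → O := fun a => wfO.min {α | seqF wA c n a α = a} (hcon a) with hδ
  have hδ1 : ∀ a, seqF wA c n a (δ a) = a := fun a => wfO.min_mem _ (hcon a)
  have hδ2 : ∀ a, ∀ β < δ a, seqF wA c n a β ≠ a := by
    intro a β hβ he
    exact wfO.not_lt_min _ he hβ
  have hlive : ∀ (a : A) (β : O), β ≤ δ a → live wA c n a β := by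
    intro a β hβ γ hγ
    exact hδ2 a γ (lt_of_lt_of_le hγ hβ)
  -- the coding map
  set T : O → Type := fun δ₀ => {s : Finset O // ↑s ⊆ Set.Iio δ₀ ∧ s.card = n + 1} with hT
  set Φ : A → Σ δ₀ : O, (T δ₀ → ι) :=
    fun a => ⟨δ a, fun s => c (insert a (s.1.image (seqF wA c n a)))⟩ with hΦ
  have hinj : Injective Φ := by
    intro a a' he
    have h1 : δ a = δ a' := congrArg Sigma.fst he
    have hty : ∀ s : Finset O, ↑s ⊆ Set.Iio (δ a) → s.card = n + 1 →
        c (insert a (s.image (seqF wA c n a))) = c (insert a' (s.image (seqF wA c n a'))) := by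
      intro s hs hc
      exact sigma_eval he s ⟨hs, hc⟩ ⟨h1 ▸ hs, hc⟩
    have main : ∀ β : O, β ≤ δ a → seqF wA c n a β = seqF wA c n a' β := by
      intro β
      induction β using WellFoundedLT.induction with
      | ind β IH =>
        intro hβ
        have hβ' : β ≤ δ a' := h1 ▸ hβ
        have Pimg : seqF wA c n a '' Set.Iio β = seqF wA c n a' '' Set.Iio β := by
          apply Set.image_congr
          intro γ hγ
          exact IH γ hγ ((le_of_lt hγ).trans hβ)
        -- injectivity of seqF a on Iio β
        have hinjOn : Set.InjOn (seqF wA c n a) (Set.Iio β) := by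
          intro γ₁ h₁ γ₂ h₂ hgg
          by_contra hne
          rcases lt_or_gt_of_ne hne with hlt | hlt
          · exact seqF_lt_ne (hlive a γ₂ ((le_of_lt h₂).trans hβ)) hlt hgg
          · exact seqF_lt_ne (hlive a γ₁ ((le_of_lt h₁).trans hβ)) hlt hgg.symm
        have claim : ∀ s : Finset A, ↑s ⊆ seqF wA c n a '' Set.Iio β → s.card = n + 1 →
            c (insert a s) = c (insert a' s) := by
          intro s hs hcard
          classical
          obtain ⟨I, hI, hIs⟩ := Finset.subset_set_image_iff.mp hs
          have hIcard : I.card = n + 1 := by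
            rw [← hcard, ← hIs]
            exact (Finset.card_image_of_injOn (hinjOn.mono hI)).symm
          have hIδ : ↑I ⊆ Set.Iio (δ a) := fun γ hγ => lt_of_lt_of_le (hI hγ) hβ
          have him : I.image (seqF wA c n a') = I.image (seqF wA c n a) :=
            Finset.image_congr (fun γ hγ => (IH γ (hI hγ) ((le_of_lt (hI hγ)).trans hβ)).symm)
          calc c (insert a s) = c (insert a (I.image (seqF wA c n a))) := by rw [hIs]
            _ = c (insert a' (I.image (seqF wA c n a'))) := hty I hIδ hIcard
            _ = c (insert a' s) := by rw [him, hIs]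
        have hcomp : compatSet c n (seqF wA c n a '' Set.Iio β) a
            = compatSet c n (seqF wA c n a '' Set.Iio β) a' := by
          ext y
          simp only [compatSet, Set.mem_setOf_eq]
          constructor
          · rintro ⟨hy, hcp⟩
            exact ⟨hy, fun s hs hcd => (hcp s hs hcd).trans (claim s hs hcd)⟩
          · rintro ⟨hy, hcp⟩
            exact ⟨hy, fun s hs hcd => (hcp s hs hcd).trans (claim s hs hcd).symm⟩
        have hne : (compatSet c n (seqF wA c n a '' Set.Iio β) a).Nonempty :=
          ⟨a, self_mem_compatSet (not_mem_of_live (hlive a β hβ))⟩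
        have hne' : (compatSet c n (seqF wA c n a' '' Set.Iio β) a').Nonempty :=
          ⟨a', self_mem_compatSet (not_mem_of_live (hlive a' β hβ'))⟩
        rw [seqF_eq, seqF_eq, nextPt, nextPt, dif_pos hne, dif_pos hne']
        exact min_congr (by rw [hcomp, Pimg]) hne hne'
    calc a = seqF wA c n a (δ a) := (hδ1 a).symm
      _ = seqF wA c n a' (δ a) := main (δ a) le_rfl
      _ = seqF wA c n a' (δ a') := by rw [h1]
      _ = a' := hδ1 a'
  -- counting
  have hcount : #A ≤ 2 ^ lam := by
    calc #A ≤ #(Σ δ₀ : O, (T δ₀ → ι)) := mk_le_of_injective hinj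
      _ = Cardinal.sum (fun δ₀ : O => #(T δ₀ → ι)) := mk_sigma _
      _ ≤ Cardinal.sum (fun _ : O => 2 ^ lam) := by
          apply Cardinal.sum_le_sum
          intro δ₀
          have hTle : #(T δ₀) ≤ lam := by
            classical
            have hmap : Injective (fun s : T δ₀ =>
                Finset.preimage s.1 (Subtype.val : Set.Iio δ₀ → O)
                  Subtype.val_injective.injOn) := by
              intro s t hst
              have hst' : Finset.preimage s.1 (Subtype.val : Set.Iio δ₀ → O)
                    Subtype.val_injective.injOn
                  = Finset.preimage t.1 (Subtype.val : Set.Iio δ₀ → O)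
                    Subtype.val_injective.injOn := hst
              apply Subtype.ext
              ext x
              constructor
              · intro hx
                have hxI : x ∈ Set.Iio δ₀ := s.2.1 hx
                have h1 : (⟨x, hxI⟩ : Set.Iio δ₀) ∈
                    Finset.preimage s.1 (Subtype.val : Set.Iio δ₀ → O)
                      Subtype.val_injective.injOn := Finset.mem_preimage.mpr hx
                rw [hst'] at h1
                exact Finset.mem_preimage.mp h1
              · intro hx
                have hxI : x ∈ Set.Iio δ₀ := t.2.1 hx
                have h1 : (⟨x, hxI⟩ : Set.Iio δ₀) ∈
                    Finset.preimage t.1 (Subtype.val : Set.Iio δ₀ → O)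
                      Subtype.val_injective.injOn := Finset.mem_preimage.mpr hx
                rw [← hst'] at h1
                exact Finset.mem_preimage.mp h1
            calc #(T δ₀) ≤ #(Finset (Set.Iio δ₀)) := mk_le_of_injective hmap
              _ ≤ max ℵ₀ #(Set.Iio δ₀) := mk_finset_le _
              _ ≤ max ℵ₀ lam := max_le_max le_rfl (hIio δ₀)
              _ = lam := max_eq_right hlam
          calc #(T δ₀ → ι) = #ι ^ #(T δ₀) := (Cardinal.power_def ι (T δ₀)).symm
            _ ≤ lam ^ #(T δ₀) := Cardinal.power_le_power_right hι
            _ ≤ lam ^ lam := Cardinal.power_le_power_left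
                ((Cardinal.aleph0_pos.trans_le hlam).ne') hTle
            _ = 2 ^ lam := Cardinal.power_self_eq hlam
      _ = #O * 2 ^ lam := Cardinal.sum_const' _ _
      _ ≤ (2 ^ lam) * 2 ^ lam := mul_le_mul' hO le_rfl
      _ = 2 ^ lam := Cardinal.mul_eq_self (hlam.trans (Cardinal.cantor lam).le)
  exact absurd hcount (not_le.mpr hA)

end ErdosRadoAux

open ErdosRadoAux Function

lemma iterBeth_le (κ : Cardinal) (hκ : ℵ₀ ≤ κ) : ∀ r : ℕ, ℵ₀ ≤ iterBeth κ r ∧ κ ≤ iterBeth κ r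
  | 0 => ⟨hκ, le_rfl⟩
  | r + 1 => by
    obtain ⟨h1, h2⟩ := iterBeth_le κ hκ r
    have : iterBeth κ r ≤ 2 ^ iterBeth κ r := (Cardinal.cantor _).le
    exact ⟨h1.trans this, h2.trans this⟩

/-- Erdős–Rado, by induction on `r`. -/
theorem erdosRado : ∀ (r : ℕ) (κ : Cardinal), ℵ₀ ≤ κ →
    ∀ (A : Type), #A = Order.succ (iterBeth κ r) →
    ∀ (ι : Type), #ι ≤ κ → ∀ (c : Finset A → ι),
    ∃ H : Set A, Order.succ κ ≤ #H ∧
      ∀ s t : Finset A, ↑s ⊆ H → ↑t ⊆ H → s.card = r + 1 → t.card = r + 1 →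
        c s = c t := by
  intro r
  induction r with
  | zero =>
    intro κ hκ A hA ι hι c
    -- pigeonhole
    classical
    set f : A → ι := fun a => c {a} with hf
    by_cases hfib : ∃ i : ι, Order.succ κ ≤ #(f ⁻¹' {i})
    · obtain ⟨i, hi⟩ := hfib
      refine ⟨f ⁻¹' {i}, hi, ?_⟩
      intro s t hs ht hcs hct
      obtain ⟨x, rfl⟩ := Finset.card_eq_one.mp hcs
      obtain ⟨y, rfl⟩ := Finset.card_eq_one.mp hct
      have hx : f x = i := hs (Finset.mem_singleton_self x)
      have hy : f y = i := ht (Finset.mem_singleton_self y)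
      show f x = f y
      rw [hx, hy]
    · push_neg at hfib
      exfalso
      have hle : ∀ i, #(f ⁻¹' {i}) ≤ κ := by
        intro i
        exact Order.lt_succ_iff.mp (hfib i)
      have : #A ≤ κ := by
        calc #A = #(Σ i : ι, f ⁻¹' {i}) := (Cardinal.mk_congr (Equiv.sigmaFiberEquiv f)).symm
          _ = Cardinal.sum (fun i : ι => #(f ⁻¹' {i})) := mk_sigma _
          _ ≤ Cardinal.sum (fun _ : ι => κ) := Cardinal.sum_le_sum _ _ hle
          _ = #ι * κ := Cardinal.sum_const' _ _
          _ ≤ κ * κ := mul_le_mul' hι le_rfl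
          _ = κ := Cardinal.mul_eq_self hκ
      rw [hA] at this
      exact absurd ((Order.lt_succ κ).trans_le this) (lt_irrefl κ)
  | succ r IH =>
    intro κ hκ A hA ι hι c
    classical
    set lam : Cardinal := iterBeth κ r with hlamdef
    obtain ⟨hlam, hκlam⟩ := iterBeth_le κ hκ r
    set O : Type := (Order.succ lam).ord.ToType with hOdef
    have hOcard : #O = Order.succ lam := by
      rw [hOdef, Cardinal.mk_toType, Cardinal.card_ord]
    have hIio : ∀ δ : O, #(Set.Iio δ) ≤ lam := by
      intro δ
      have := Cardinal.mk_Iio_ord_toType δ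
      exact Order.lt_succ_iff.mp this
    have hO2 : #O ≤ 2 ^ lam := by
      rw [hOcard]
      exact Order.succ_le_iff.mpr (Cardinal.cantor lam)
    have hA2 : 2 ^ lam < #A := by
      rw [hA]
      exact Order.lt_succ_iff.mpr le_rfl
    have wA : WellFounded (@WellOrderingRel A) := (WellOrderingRel.isWellOrder).toIsWellFounded.wf
    obtain ⟨a, ha⟩ := exists_good (O := O) wA c r lam hlam (hι.trans hκlam) hO2 hIio hA2
    have hliveall : ∀ α : O, live wA c r a α := fun α γ _ => ha γ
    set e : O → A := seqF wA c r a with he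
    have heinj : Injective e := by
      intro γ₁ γ₂ hg
      by_contra hne
      rcases lt_or_gt_of_ne hne with hlt | hlt
      · exact seqF_lt_ne (hliveall γ₂) hlt hg
      · exact seqF_lt_ne (hliveall γ₁) hlt hg.symm
    have hendhom : ∀ (I : Finset O) (α : O), (∀ β ∈ I, β < α) → I.card = r + 1 →
        c (insert (e α) (I.image e)) = c (insert a (I.image e)) := by
      intro I α hIα hIcard
      have hmem := seqF_mem_compat (c := c) (n := r) (a := a) (α := α) (hliveall α)
      refine hmem.2 (I.image e) ?_ ?_
      · intro x hx
        simp only [Finset.coe_image, Set.mem_image, Finset.mem_coe] at hx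
        obtain ⟨β, hβ, rfl⟩ := hx
        exact ⟨β, hIα β hβ, rfl⟩
      · rw [Finset.card_image_of_injective _ heinj, hIcard]
    -- apply induction hypothesis to the coloring d on O
    set d : Finset O → ι := fun I => c (insert a (I.image e)) with hd
    obtain ⟨H', hH'card, hH'hom⟩ := IH κ hκ O hOcard ι hι d
    refine ⟨e '' H', ?_, ?_⟩
    · rwa [Cardinal.mk_image_eq heinj]
    · intro s t hs ht hcs hct
      -- lift s and t to finsets of O
      have key : ∀ u : Finset A, ↑u ⊆ e '' H' → u.card = r + 2 →
          ∃ J : Finset O, ↑J ⊆ H' ∧ J.card = r + 1 ∧ c u = d J := by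
        intro u hu hucard
        obtain ⟨I, hIH', hIu⟩ := Finset.subset_set_image_iff.mp hu
        have hIcard : I.card = r + 2 := by
          rw [← hucard, ← hIu]
          exact (Finset.card_image_of_injective _ heinj).symm
        have hne : I.Nonempty := Finset.card_pos.mp (by omega)
        set α : O := I.max' hne with hα
        set I' : Finset O := I.erase α with hI'
        have hI'card : I'.card = r + 1 := by
          rw [hI', Finset.card_erase_of_mem (I.max'_mem hne), hIcard]
          omega
        have hI'lt : ∀ β ∈ I', β < α :=
          fun β hβ => lt_of_le_of_ne (I.le_max' β (Finset.mem_of_mem_erase hβ))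
            (Finset.ne_of_mem_erase hβ)
        have hins : insert α I' = I := Finset.insert_erase (I.max'_mem hne)
        refine ⟨I', fun β hβ => hIH' (Finset.mem_of_mem_erase hβ), hI'card, ?_⟩
        calc c u = c (I.image e) := by rw [hIu]
          _ = c (insert (e α) (I'.image e)) := by rw [← hins, Finset.image_insert]
          _ = c (insert a (I'.image e)) := hendhom I' α hI'lt hI'card
          _ = d I' := rfl
      obtain ⟨J₁, hJ₁, hJ₁c, hcu₁⟩ := key s hs hcs
      obtain ⟨J₂, hJ₂, hJ₂c, hcu₂⟩ := key t ht hct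
      rw [hcu₁, hcu₂]
      exact hH'hom J₁ J₂ hJ₁ hJ₂ hJ₁c hJ₂c

/-- Erdős–Rado: for every infinite cardinal `κ` and natural number `r`,
`beth_r(κ)⁺ → (κ⁺)^{r+1}_κ`: every coloring of the `(r+1)`-element subsets of a set of
size `beth_r(κ)⁺` in at most `κ` colors admits a homogeneous set of size `κ⁺`. -/
theorem stmt5 (κ : Cardinal) (hκ : ℵ₀ ≤ κ) (r : ℕ)
    (A : Type) (hA : #A = Order.succ (iterBeth κ r))
    (ι : Type) (hι : #ι ≤ κ) (c : Finset A → ι) :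
    ∃ H : Set A, Order.succ κ ≤ #H ∧
      ∀ s t : Finset A, ↑s ⊆ H → ↑t ⊆ H → s.card = r + 1 → t.card = r + 1 →
        c s = c t := by
  exact erdosRado r κ hκ A hA ι hι c
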